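/- The sum over all valleyless permutations π of length n of q^{i(π)}, where i(π) is the number of inversions of π, equals the product (1+q)(1+q^2)···(1+q^{n-1}). -/

import Mathlib

open Polynomial

/-- A permutation word `π 0, …, π (n-1)` is valleyless if no entry is strictly below
some earlier entry and some later entry. -/
def PermValleyless {n : ℕ} (π : Equiv.Perm (Fin n)) : Prop :=
  ∀ i j k : Fin n, i < j → j < k → min (π i) (π k) ≤ π j

instance {n : ℕ} : DecidablePred (PermValleyless (n := n)) := fun _ => by
  unfold PermValleyless; infer_instance

/-- The number of inversions of a permutation. -/
def invNum {n : ℕ} (π : Equiv.Perm (Fin n)) : ℕ :=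
  (Finset.univ.filter (fun p : Fin n × Fin n => p.1 < p.2 ∧ π p.2 < π p.1)).card

section Aux
open Equiv Finset

def ext0 {n : ℕ} (σ : Equiv.Perm (Fin n)) : Equiv.Perm (Fin (n+1)) :=
  (finSuccEquiv n).symm.permCongr σ.optionCongr

@[simp] lemma ext0_zero {n : ℕ} (σ : Equiv.Perm (Fin n)) : ext0 σ 0 = 0 := by
  simp [ext0, Equiv.permCongr_apply]

@[simp] lemma ext0_succ {n : ℕ} (σ : Equiv.Perm (Fin n)) (i : Fin n) :
    ext0 σ i.succ = (σ i).succ := by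
  simp [ext0, Equiv.permCongr_apply]

def extL {n : ℕ} (σ : Equiv.Perm (Fin n)) : Equiv.Perm (Fin (n+1)) :=
  (finRotate (n+1)).trans (ext0 σ)

@[simp] lemma extL_last {n : ℕ} (σ : Equiv.Perm (Fin n)) : extL σ (Fin.last n) = 0 := by
  simp [extL, finRotate_last]

@[simp] lemma extL_castSucc {n : ℕ} (σ : Equiv.Perm (Fin n)) (i : Fin n) :
    extL σ i.castSucc = (σ i).succ := by
  simp [extL, Fin.coeSucc_eq_succ]

lemma min_succ {n : ℕ} (a b : Fin n) : min a.succ b.succ = (min a b).succ := by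
  rcases le_total a b with h | h <;> simp [min_eq_left, min_eq_right, h, Fin.succ_le_succ_iff]

lemma vl_ext0 {n : ℕ} (σ : Equiv.Perm (Fin n)) :
    PermValleyless (ext0 σ) ↔ PermValleyless σ := by
  constructor
  · intro h i j k hij hjk
    have := h i.succ j.succ k.succ (Fin.succ_lt_succ_iff.2 hij) (Fin.succ_lt_succ_iff.2 hjk)
    simpa [min_succ, Fin.succ_le_succ_iff] using this
  · intro h i j k hij hjk
    rcases eq_or_ne i 0 with rfl | hi
    · have : min (ext0 σ 0) (ext0 σ k) ≤ 0 := by simp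
      exact this.trans (Fin.zero_le _)
    · obtain ⟨i', rfl⟩ := Fin.exists_succ_eq_of_ne_zero hi
      have hj : j ≠ 0 := Fin.pos_iff_ne_zero.1 ((Fin.zero_le _).trans_lt hij)
      have hk : k ≠ 0 := Fin.pos_iff_ne_zero.1 ((Fin.zero_le _).trans_lt (hij.trans hjk))
      obtain ⟨j', rfl⟩ := Fin.exists_succ_eq_of_ne_zero hj
      obtain ⟨k', rfl⟩ := Fin.exists_succ_eq_of_ne_zero hk
      have := h i' j' k' (Fin.succ_lt_succ_iff.1 hij) (Fin.succ_lt_succ_iff.1 hjk)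
      simpa [min_succ, Fin.succ_le_succ_iff] using this

lemma vl_extL {n : ℕ} (σ : Equiv.Perm (Fin n)) :
    PermValleyless (extL σ) ↔ PermValleyless σ := by
  constructor
  · intro h i j k hij hjk
    have := h i.castSucc j.castSucc k.castSucc (Fin.castSucc_lt_castSucc_iff.2 hij)
      (Fin.castSucc_lt_castSucc_iff.2 hjk)
    simpa [min_succ, Fin.succ_le_succ_iff] using this
  · intro h i j k hij hjk
    rcases eq_or_ne k (Fin.last n) with rfl | hk
    · have : min (extL σ i) (extL σ (Fin.last n)) ≤ 0 := by simp
      exact this.trans (Fin.zero_le _)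
    · have hj : j ≠ Fin.last n := ne_of_lt (hjk.trans_le (Fin.le_last _))
      have hi : i ≠ Fin.last n := ne_of_lt ((hij.trans hjk).trans_le (Fin.le_last _))
      obtain ⟨i', rfl⟩ := Fin.exists_castSucc_eq.2 hi
      obtain ⟨j', rfl⟩ := Fin.exists_castSucc_eq.2 hj
      obtain ⟨k', rfl⟩ := Fin.exists_castSucc_eq.2 hk
      have := h i' j' k' (Fin.castSucc_lt_castSucc_iff.1 hij) (Fin.castSucc_lt_castSucc_iff.1 hjk)
      simpa [min_succ, Fin.succ_le_succ_iff] using this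

lemma vl_ends {n : ℕ} (π : Equiv.Perm (Fin (n+1))) (h : PermValleyless π) :
    π 0 = 0 ∨ π (Fin.last n) = 0 := by
  set j := π.symm 0 with hj
  have hπj : π j = 0 := π.apply_symm_apply 0
  rcases eq_or_ne j 0 with h0 | h0
  · left; exact h0 ▸ hπj
  rcases eq_or_ne j (Fin.last n) with hl | hl
  · right; exact hl ▸ hπj
  · have h1 : (0 : Fin (n+1)) < j := Fin.pos_iff_ne_zero.2 h0
    have h2 : j < Fin.last n := lt_of_le_of_ne (Fin.le_last _) hl
    have := h 0 j (Fin.last n) h1 h2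
    rw [hπj, Fin.le_zero_iff] at this
    rcases min_eq_iff.1 this with ⟨ha, _⟩ | ⟨ha, _⟩
    · exact absurd (π.injective (ha.trans hπj.symm)) (Ne.symm h0)
    · exact absurd (π.injective (ha.trans hπj.symm)) (Ne.symm hl)

lemma invNum_ext0 {n : ℕ} (σ : Equiv.Perm (Fin n)) : invNum (ext0 σ) = invNum σ := by
  unfold invNum
  symm
  apply Finset.card_bij (fun p _ => (p.1.succ, p.2.succ))
  · rintro ⟨i, j⟩ hp
    simp only [Finset.mem_filter, Finset.mem_univ, true_and] at hp ⊢
    simpa [Fin.succ_lt_succ_iff] using hp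
  · rintro ⟨i, j⟩ _ ⟨i', j'⟩ _ h
    simp only [Prod.mk.injEq] at h
    exact Prod.ext (Fin.succ_injective _ h.1) (Fin.succ_injective _ h.2)
  · rintro ⟨p, q⟩ hp
    simp only [Finset.mem_filter, Finset.mem_univ, true_and] at hp
    obtain ⟨hpq, hval⟩ := hp
    have hp0 : p ≠ 0 := by
      intro h; subst h
      simp only [ext0_zero] at hval
      exact absurd hval (by simp [Fin.le_zero_iff])
    have hq0 : q ≠ 0 := Fin.pos_iff_ne_zero.1 ((Fin.zero_le _).trans_lt hpq)
    obtain ⟨i, rfl⟩ := Fin.exists_succ_eq_of_ne_zero hp0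
    obtain ⟨j, rfl⟩ := Fin.exists_succ_eq_of_ne_zero hq0
    refine ⟨(i, j), ?_, rfl⟩
    simp only [Finset.mem_filter, Finset.mem_univ, true_and]
    constructor
    · exact Fin.succ_lt_succ_iff.1 hpq
    · simpa [Fin.succ_lt_succ_iff] using hval

lemma invNum_extL {n : ℕ} (σ : Equiv.Perm (Fin n)) : invNum (extL σ) = invNum σ + n := by
  unfold invNum
  have hset : (Finset.univ.filter
      (fun p : Fin (n+1) × Fin (n+1) => p.1 < p.2 ∧ extL σ p.2 < extL σ p.1)) =
      ((Finset.univ.filter (fun p : Fin n × Fin n => p.1 < p.2 ∧ σ p.2 < σ p.1)).image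
        (Prod.map Fin.castSucc Fin.castSucc)) ∪
      (Finset.univ.image (fun i : Fin n => (i.castSucc, Fin.last n))) := by
    ext ⟨p, q⟩
    simp only [Finset.mem_filter, Finset.mem_univ, true_and, Finset.mem_union,
      Finset.mem_image, Prod.ext_iff, Prod.map]
    constructor
    · rintro ⟨hpq, hval⟩
      have hpl : p ≠ Fin.last n := ne_of_lt (hpq.trans_le (Fin.le_last _))
      obtain ⟨i, rfl⟩ := Fin.exists_castSucc_eq.2 hpl
      rcases eq_or_ne q (Fin.last n) with rfl | hql
      · exact Or.inr ⟨i, rfl, rfl⟩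
      · obtain ⟨j, rfl⟩ := Fin.exists_castSucc_eq.2 hql
        refine Or.inl ⟨(i, j), ?_, rfl, rfl⟩
        simp only [Finset.mem_filter, Finset.mem_univ, true_and]
        constructor
        · exact Fin.castSucc_lt_castSucc_iff.1 hpq
        · simpa [Fin.succ_lt_succ_iff] using hval
    · rintro (⟨⟨i, j⟩, hm, rfl, rfl⟩ | ⟨i, rfl, rfl⟩)
      · simp only [Finset.mem_filter, Finset.mem_univ, true_and] at hm
        exact ⟨Fin.castSucc_lt_castSucc_iff.2 hm.1,
          by simpa [Fin.succ_lt_succ_iff] using hm.2⟩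
      · refine ⟨Fin.castSucc_lt_last _, ?_⟩
        simp only [extL_last, extL_castSucc]
        exact Fin.succ_pos _
  rw [hset, Finset.card_union_of_disjoint, Finset.card_image_of_injective,
    Finset.card_image_of_injective, Finset.card_univ, Fintype.card_fin]
  · intro i j h
    simpa using congrArg Prod.fst h
  · exact fun a b h => Prod.ext (Fin.castSucc_injective _ (congrArg Prod.fst h))
      (Fin.castSucc_injective _ (congrArg Prod.snd h))
  · rw [Finset.disjoint_left]
    rintro ⟨p, q⟩ h1 h2
    simp only [Finset.mem_image, Prod.ext_iff, Prod.map] at h1 h2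
    obtain ⟨⟨i, j⟩, _, _, hq⟩ := h1
    obtain ⟨i', _, hq'⟩ := h2
    exact absurd (hq.trans hq'.2.symm) (Fin.castSucc_lt_last j).ne

lemma ext0_surj {n : ℕ} (π : Equiv.Perm (Fin (n+1))) (h0 : π 0 = 0) :
    ∃ σ : Equiv.Perm (Fin n), ext0 σ = π := by
  set e : Equiv.Perm (Option (Fin n)) := (finSuccEquiv n).permCongr π with he
  have hen : e none = none := by
    simp [he, Equiv.permCongr_apply, h0]
  refine ⟨Equiv.removeNone e, ?_⟩
  ext x
  induction x using Fin.cases with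
  | zero => simp [h0]
  | succ i =>
    have hne : π i.succ ≠ 0 := by
      intro h
      exact absurd (π.injective (h.trans h0.symm)) (Fin.succ_ne_zero i)
    obtain ⟨m, hm⟩ := Fin.exists_succ_eq_of_ne_zero hne
    have hsome : e (some i) = some m := by
      simp only [he, Equiv.permCongr_apply, Equiv.symm_symm, finSuccEquiv_symm_some]
      rw [← hm, finSuccEquiv_succ]
    have := Equiv.removeNone_some e ⟨m, hsome⟩
    rw [hsome] at this
    rw [ext0_succ]
    rw [Option.some_inj.1 this, hm]

lemma extL_surj {n : ℕ} (π : Equiv.Perm (Fin (n+1))) (h0 : π (Fin.last n) = 0) :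
    ∃ σ : Equiv.Perm (Fin n), extL σ = π := by
  set π₀ : Equiv.Perm (Fin (n+1)) := (finRotate (n+1)).symm.trans π with hπ₀
  have h : π₀ 0 = 0 := by
    have : (finRotate (n+1)).symm 0 = Fin.last n :=
      (Equiv.symm_apply_eq _).2 (finRotate_last).symm
    simp [hπ₀, this, h0]
  obtain ⟨σ, hσ⟩ := ext0_surj π₀ h
  refine ⟨σ, ?_⟩
  ext x
  have : extL σ x = π₀ (finRotate (n+1) x) := by
    rw [← hσ]; rfl
  rw [this, hπ₀]
  simp only [Equiv.trans_apply]
  rw [Equiv.symm_apply_apply]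

lemma sum0 {n : ℕ} :
    ∑ π ∈ Finset.univ.filter (fun π : Equiv.Perm (Fin (n+1)) =>
        PermValleyless π ∧ π 0 = 0), (X : ℤ[X]) ^ invNum π =
      ∑ σ ∈ Finset.univ.filter (PermValleyless (n := n)), (X : ℤ[X]) ^ invNum σ := by
  symm
  apply Finset.sum_bij (fun σ _ => ext0 σ)
  · intro σ hσ
    simp only [Finset.mem_filter, Finset.mem_univ, true_and] at hσ ⊢
    exact ⟨(vl_ext0 σ).2 hσ, ext0_zero σ⟩
  · intro σ _ τ _ h
    ext i
    have := congrFun (congrArg (fun (e : Equiv.Perm (Fin (n+1))) => (e : Fin (n+1) → Fin (n+1))) h) i.succ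
    simp only [ext0_succ] at this
    exact congrArg Fin.val (Fin.succ_injective _ this)
  · intro π hπ
    simp only [Finset.mem_filter, Finset.mem_univ, true_and] at hπ
    obtain ⟨σ, rfl⟩ := ext0_surj π hπ.2
    have hm : σ ∈ Finset.univ.filter (PermValleyless (n := n)) := by
      simp only [Finset.mem_filter, Finset.mem_univ, true_and]
      exact (vl_ext0 σ).1 hπ.1
    exact ⟨σ, hm, rfl⟩
  · intro σ _
    rw [invNum_ext0]

lemma sumL {n : ℕ} :
    ∑ π ∈ Finset.univ.filter (fun π : Equiv.Perm (Fin (n+1)) =>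
        PermValleyless π ∧ π (Fin.last n) = 0), (X : ℤ[X]) ^ invNum π =
      X ^ n * ∑ σ ∈ Finset.univ.filter (PermValleyless (n := n)), (X : ℤ[X]) ^ invNum σ := by
  rw [Finset.mul_sum]
  symm
  apply Finset.sum_bij (fun σ _ => extL σ)
  · intro σ hσ
    simp only [Finset.mem_filter, Finset.mem_univ, true_and] at hσ ⊢
    exact ⟨(vl_extL σ).2 hσ, extL_last σ⟩
  · intro σ _ τ _ h
    ext i
    have := congrFun (congrArg (fun (e : Equiv.Perm (Fin (n+1))) => (e : Fin (n+1) → Fin (n+1))) h) i.castSucc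
    simp only [extL_castSucc] at this
    exact congrArg Fin.val (Fin.succ_injective _ this)
  · intro π hπ
    simp only [Finset.mem_filter, Finset.mem_univ, true_and] at hπ
    obtain ⟨σ, rfl⟩ := extL_surj π hπ.2
    have hm : σ ∈ Finset.univ.filter (PermValleyless (n := n)) := by
      simp only [Finset.mem_filter, Finset.mem_univ, true_and]
      exact (vl_extL σ).1 hπ.1
    exact ⟨σ, hm, rfl⟩
  · intro σ _
    rw [invNum_extL, pow_add, mul_comm]

lemma step {n : ℕ} (hn : 1 ≤ n) :
    ∑ π ∈ Finset.univ.filter (PermValleyless (n := n+1)), (X : ℤ[X]) ^ invNum π =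
      (1 + X ^ n) * ∑ σ ∈ Finset.univ.filter (PermValleyless (n := n)),
        (X : ℤ[X]) ^ invNum σ := by
  rw [← Finset.sum_filter_add_sum_filter_not
    (Finset.univ.filter (PermValleyless (n := n+1))) (fun π => π 0 = 0),
    Finset.filter_filter, Finset.filter_filter]
  have h2 : (Finset.univ.filter (fun π : Equiv.Perm (Fin (n+1)) =>
      PermValleyless π ∧ ¬π 0 = 0)) =
      (Finset.univ.filter (fun π : Equiv.Perm (Fin (n+1)) =>
      PermValleyless π ∧ π (Fin.last n) = 0)) := by
    ext π
    simp only [Finset.mem_filter, Finset.mem_univ, true_and, and_congr_right_iff]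
    intro hvl
    constructor
    · intro h
      rcases vl_ends π hvl with h0 | h0
      · exact absurd h0 h
      · exact h0
    · intro h h0
      have : (0 : Fin (n+1)) = Fin.last n := π.injective (h0.trans h.symm)
      have : (0 : ℕ) = n := congrArg Fin.val this
      omega
  rw [h2, sum0, sumL, one_add_mul]

lemma base (m : ℕ) (hm : m ≤ 1) :
    ∑ π ∈ Finset.univ.filter (PermValleyless (n := m)), (X : ℤ[X]) ^ invNum π = 1 := by
  have hinv : ∀ π : Equiv.Perm (Fin m), invNum π = 0 := by
    intro π
    unfold invNum
    rw [Finset.card_eq_zero, Finset.filter_eq_empty_iff]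
    rintro ⟨i, j⟩ _ ⟨hij, _⟩
    have h1 : (i : ℕ) < j := hij
    have := j.2
    omega
  have hvl : ∀ π : Equiv.Perm (Fin m), PermValleyless π := by
    intro π i j k h1 h2
    exfalso
    have h1' : (i : ℕ) < j := h1
    have h2' : (j : ℕ) < k := h2
    have := k.2
    omega
  rw [Finset.filter_true_of_mem (fun π _ => hvl π),
    Finset.sum_congr rfl (fun π _ => by rw [hinv π, pow_zero]),
    Finset.sum_const, Finset.card_univ, Fintype.card_perm, Fintype.card_fin]
  interval_cases m <;> simp

end Aux

/-- `∑_{π valleyless} q^{i(π)} = (1+q)(1+q²)⋯(1+q^{n-1})`. -/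
theorem valleyless_inversion_gf (n : ℕ) :
    ∑ π ∈ Finset.univ.filter (PermValleyless (n := n)),
        (X : ℤ[X]) ^ invNum π =
      ∏ i ∈ Finset.range (n - 1), (1 + (X : ℤ[X]) ^ (i + 1)) := by
  induction n with
  | zero => rw [base 0 (by omega)]; simp
  | succ k ih =>
    rcases Nat.eq_zero_or_pos k with rfl | hk
    · rw [base 1 le_rfl]; simp
    · rw [step hk, ih, show k + 1 - 1 = k from rfl]
      obtain ⟨m, rfl⟩ := Nat.exists_eq_add_of_le hk
      rw [show 1 + m - 1 = m from by omega, add_comm 1 m, Finset.prod_range_succ, mul_comm]
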